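/- Consider the two-player one-dimensional Battling Influencers Game with action set 𝒳 = [a,b] (a < b), receiver x̂ = (x_1 + x_2)/2, and targets satisfying t_1 < t_2, a < t_2, and t_2 < (a+b)/2, where player i's loss is ℓ_i(x_1,x_2) = ((x_1+x_2)/2 − t_i)². Then (x_1, x_2) = (a, 2t_2 − a) is the unique pure Nash equilibrium; at this equilibrium the receiver's point equals player 2's target: (x_1 + x_2)/2 = t_2. -/
import Mathlib


noncomputable section

/-- Player `i`'s loss in the two-player one-dimensional Battling Influencers
Game with receiver `x̂ = (x₁ + x₂)/2` and target `t`: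
`ℓ(x₁, x₂) = ((x₁ + x₂)/2 − t)²`. -/
def loss1D (t x1 x2 : ℝ) : ℝ := ((x1 + x2) / 2 - t) ^ 2

/-- `(x₁, x₂)` is a pure Nash equilibrium of the two-player one-dimensional
Battling Influencers Game on `𝒳 = [a, b]` with targets `t₁, t₂`. -/
def IsPureNE1D (a b t1 t2 x1 x2 : ℝ) : Prop :=
  x1 ∈ Set.Icc a b ∧ x2 ∈ Set.Icc a b ∧
    (∀ y ∈ Set.Icc a b, loss1D t1 x1 x2 ≤ loss1D t1 y x2) ∧
    (∀ y ∈ Set.Icc a b, loss1D t2 x1 x2 ≤ loss1D t2 x1 y)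

/-- If `x ∈ [a,b]` minimizes `((y+c)/2 - t)^2` over `y ∈ [a,b]`, then
`x` is the clamp of `2t - c` to `[a,b]`. -/
lemma quad_min_clamp (a b c t x : ℝ) (hab : a ≤ b) (hx : x ∈ Set.Icc a b)
    (h : ∀ y ∈ Set.Icc a b, ((x + c) / 2 - t) ^ 2 ≤ ((y + c) / 2 - t) ^ 2) :
    x = max a (min b (2 * t - c)) := by
  set z := 2 * t - c with hz
  set m := max a (min b z) with hm
  have hma : a ≤ m := le_max_left _ _
  have hmb : m ≤ b := max_le hab (min_le_left _ _)
  have hbet : (m - x) * (m - z) ≤ 0 := by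
    rcases le_total z a with hza | haz
    · have : m = a := by
        rw [hm, min_eq_right (hza.trans hab), max_eq_left hza]
      rw [this]
      have := hx.1
      nlinarith
    · rcases le_total b z with hbz | hzb
      · have : m = b := by rw [hm, min_eq_left hbz, max_eq_right hab]
        rw [this]
        have := hx.2
        nlinarith
      · have : m = z := by rw [hm, min_eq_right hzb, max_eq_right haz]
        rw [this]; ring_nf; nlinarith
  have h1 := h m ⟨hma, hmb⟩
  nlinarith [sq_nonneg (x - m), sq_nonneg ((x + c) / 2 - t + ((m + c) / 2 - t))]

/-- With `a < b`, `t₁ < t₂`, `a < t₂ < (a+b)/2`, the pair `(a, 2t₂ − a)` is the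
unique pure Nash equilibrium of the two-player one-dimensional Battling
Influencers Game, and at this equilibrium the receiver ends at player 2's
target: `(x₁ + x₂)/2 = t₂`. -/
theorem same_side_targets_unique_pNE (a b t1 t2 : ℝ) (hab : a < b)
    (ht12 : t1 < t2) (hat2 : a < t2) (ht2 : t2 < (a + b) / 2) :
    IsPureNE1D a b t1 t2 a (2 * t2 - a) ∧
      (∀ x1 x2 : ℝ, IsPureNE1D a b t1 t2 x1 x2 → x1 = a ∧ x2 = 2 * t2 - a) ∧
      (a + (2 * t2 - a)) / 2 = t2 := by
  have hab' : a ≤ b := hab.le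
  refine ⟨⟨⟨le_refl a, hab'⟩, ⟨by linarith, by linarith⟩, ?_, ?_⟩, ?_, by ring⟩
  · -- player 1's condition at the equilibrium
    intro y hy
    unfold loss1D
    have hy1 := hy.1
    nlinarith [sq_nonneg ((y + (2 * t2 - a)) / 2 - t1 - (t2 - t1))]
  · -- player 2's loss is 0 at the equilibrium
    intro y hy
    unfold loss1D
    have : (a + (2 * t2 - a)) / 2 - t2 = 0 := by ring
    rw [this]
    simpa using sq_nonneg ((a + y) / 2 - t2)
  · -- uniqueness
    rintro x1 x2 ⟨hx1, hx2, h1, h2⟩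
    have hc1 : x1 = max a (min b (2 * t1 - x2)) := by
      apply quad_min_clamp a b x2 t1 x1 hab' hx1
      intro y hy
      have := h1 y hy
      unfold loss1D at this
      convert this using 2 <;> ring
    have hc2 : x2 = max a (min b (2 * t2 - x1)) := by
      apply quad_min_clamp a b x1 t2 x2 hab' hx2
      intro y hy
      have := h2 y hy
      unfold loss1D at this
      convert this using 2 <;> ring
    have hz2b : 2 * t2 - x1 ≤ b := by
      have := hx1.1; linarith
    rw [min_eq_right hz2b] at hc2
    rcases le_total (2 * t2 - x1) a with hza | haz
    · -- x2 = a, x1 > a : contradiction via player 1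
      rw [max_eq_left hza] at hc2
      have hx1gt : a < x1 := by linarith
      have hz1 : 2 * t1 - x2 ≤ b := by
        have := hx1.2; linarith
      rw [min_eq_right hz1] at hc1
      rcases le_total (2 * t1 - x2) a with h' | h'
      · rw [max_eq_left h'] at hc1; linarith
      · rw [max_eq_right h'] at hc1; linarith
    · -- x1 + x2 = 2 t2
      rw [max_eq_right haz] at hc2
      have hz1 : 2 * t1 - x2 ≤ b := by
        have := hx1.1; linarith
      rw [min_eq_right hz1] at hc1
      rcases le_total (2 * t1 - x2) a with h' | h'
      · rw [max_eq_left h'] at hc1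
        exact ⟨hc1, by rw [hc2, hc1]⟩
      · rw [max_eq_right h'] at hc1
        exfalso; rw [hc2] at hc1; linarith

end
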